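/- Let ρ: G → SL₂(ℂ) be a group homomorphism with A₀ = ρ(α₀) = diag(−e^{−πλ₀}, −e^{πλ₀}) and suppose B = ρ(β) = (b₁₁, b₁₂; −1, b₂₂) ∈ SL₂(ℂ) satisfies (BA₀)² = (A₀B)². If BA₀ ≠ A₀B and e^{−2πλ₀} ≠ 1, then (BA₀)² = −I. -/
import Mathlib


open Complex in
/-- If `ρ : G → SL₂(ℂ)` is a homomorphism with
`A₀ = ρ(α₀) = diag(−e^{−πλ₀}, −e^{πλ₀})` and `B = ρ(β) ∈ SL₂(ℂ)` has lower-left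
entry `−1` and satisfies `(BA₀)² = (A₀B)²`, `BA₀ ≠ A₀B`, `e^{−2πλ₀} ≠ 1`, then
`(BA₀)² = −I`. -/
theorem square_is_minus_one {G : Type*} [Group G]
    (ρ : G →* Matrix (Fin 2) (Fin 2) ℂ) (α₀ β : G) (l₀ : ℂ)
    (A₀ B : Matrix (Fin 2) (Fin 2) ℂ)
    (hA₀ρ : ρ α₀ = A₀) (hBρ : ρ β = B)
    (hA₀ : A₀ = !![-exp (-(Real.pi * l₀)), 0; 0, -exp (Real.pi * l₀)])
    (hdetB : B.det = 1) (hB10 : B 1 0 = -1)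
    (hsq : (B * A₀) ^ 2 = (A₀ * B) ^ 2)
    (hne : B * A₀ ≠ A₀ * B)
    (hexp : exp (-(2 * Real.pi * l₀)) ≠ 1) :
    (B * A₀) ^ 2 = -1 := by
  obtain ⟨e, he⟩ : ∃ e, exp (-(Real.pi * l₀)) = e := ⟨_, rfl⟩
  obtain ⟨E, hE⟩ : ∃ E, exp (Real.pi * l₀) = E := ⟨_, rfl⟩
  have hEe : e * E = 1 := by
    rw [← he, ← hE, ← Complex.exp_add]; simp
  have hexp2 : exp (-(2 * Real.pi * l₀)) = e * e := by
    rw [← he, ← Complex.exp_add]; ring_nf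
  have heE : e ≠ E := by
    intro h
    rw [← h] at hEe
    exact hexp (hexp2.trans hEe)
  rw [he, hE] at hA₀
  have had : B 0 0 * B 1 1 + B 0 1 = 1 := by
    rw [Matrix.det_fin_two, hB10] at hdetB
    linear_combination hdetB
  have h10 := Matrix.ext_iff.mpr hsq 1 0
  simp [hA₀, pow_two, Matrix.mul_apply, Fin.sum_univ_two, hB10, Matrix.vecMul, dotProduct] at h10
  have hfac : (E - e) * (B 0 0 * e + B 1 1 * E) = 0 := by linear_combination h10
  have htrace : B 0 0 * e + B 1 1 * E = 0 :=
    (mul_eq_zero.mp hfac).resolve_left (sub_ne_zero.mpr (Ne.symm heE))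
  ext i j
  fin_cases i <;> fin_cases j <;>
    simp [hA₀, pow_two, Matrix.mul_apply, Fin.sum_univ_two, hB10, Matrix.vecMul, dotProduct, Matrix.one_apply]
  · linear_combination (B 0 0 * e) * htrace - e * E * had - hEe
  · linear_combination (B 0 1 * E) * htrace
  · linear_combination (-e) * htrace
  · linear_combination (B 1 1 * E) * htrace - e * E * had - hEe
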